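/- If for μ-almost every ω the map x ↦ L(x, ω) is convex on the convex set X, then the β-CVaR φ_β(x) := ⨅_{η ∈ ℝ} [ η + (1−β)⁻¹ ∫ max(L(x, ω) − η, 0) dμ(ω) ] is a convex function of x on X. -/

import Mathlib

open MeasureTheory Set

/-- If for μ-a.e. ω the loss `x ↦ L(x, ω)` is convex on the convex set `X`,
then the β-CVaR `φ_β(x) = ⨅_η [η + (1−β)⁻¹ ∫ max(L(x, ω) − η, 0) dμ]` is convex on `X`. -/
theorem cvar_convex
    {n : ℕ} (X : Set (Fin n → ℝ)) (hX : Convex ℝ X)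
    {Ω : Type*} [MeasurableSpace Ω] (μ : Measure Ω) [IsProbabilityMeasure μ]
    (L : (Fin n → ℝ) → Ω → ℝ)
    (hint : ∀ x ∈ X, Integrable (fun ω => L x ω) μ)
    (β : ℝ) (hβ : β ∈ Set.Ioo (0 : ℝ) 1)
    (hconv : ∀ᵐ ω ∂μ, ConvexOn ℝ X (fun x => L x ω)) :
    ConvexOn ℝ X
      (fun x => ⨅ η : ℝ, (η + (1 - β)⁻¹ * ∫ ω, max (L x ω - η) 0 ∂μ)) := by
  obtain ⟨hβ0, hβ1⟩ := hβ
  set c : ℝ := (1 - β)⁻¹ with hcdef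
  have hβ' : 0 < 1 - β := by linarith
  have hc0 : 0 < c := inv_pos.mpr hβ'
  have hc1 : 1 ≤ c := by
    have h := mul_inv_cancel₀ hβ'.ne'
    nlinarith
  -- integrability of the positive part
  have hI : ∀ x ∈ X, ∀ η : ℝ, Integrable (fun ω => max (L x ω - η) 0) μ := by
    intro x hx η
    exact ((hint x hx).sub (integrable_const η)).pos_part
  -- lower bound: F(x, η) ≥ ∫ L x
  have key : ∀ x ∈ X, ∀ η : ℝ,
      (∫ ω, L x ω ∂μ) ≤ η + c * ∫ ω, max (L x ω - η) 0 ∂μ := by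
    intro x hx η
    have hnn : 0 ≤ ∫ ω, max (L x ω - η) 0 ∂μ :=
      integral_nonneg fun ω => le_max_right _ _
    have hge : (∫ ω, L x ω ∂μ) - η ≤ ∫ ω, max (L x ω - η) 0 ∂μ := by
      have := integral_mono ((hint x hx).sub (integrable_const η)) (hI x hx η)
        (fun ω => le_max_left _ _)
      simp only [Pi.sub_apply] at this
      rwa [integral_sub (hint x hx) (integrable_const η), integral_const,
        probReal_univ, one_smul] at this
    rcases le_or_gt (∫ ω, L x ω ∂μ) η with h | h
    · nlinarith
    · nlinarith
  have hbdd : ∀ x ∈ X,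
      BddBelow (Set.range fun η : ℝ => η + c * ∫ ω, max (L x ω - η) 0 ∂μ) := by
    intro x hx
    refine ⟨∫ ω, L x ω ∂μ, ?_⟩
    rintro v ⟨η, rfl⟩
    exact key x hx η
  refine ⟨hX, ?_⟩
  intro x hx y hy a b ha hb hab
  have hz : a • x + b • y ∈ X := hX hx hy ha hb hab
  set z := a • x + b • y with hzdef
  apply le_of_forall_pos_le_add
  intro ε hε
  -- pick near-optimal η₁, η₂
  obtain ⟨η₁, hη₁⟩ := exists_lt_of_ciInf_lt (a := (⨅ η : ℝ, (η + c * ∫ ω, max (L x ω - η) 0 ∂μ)) + ε)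
    (by linarith)
  obtain ⟨η₂, hη₂⟩ := exists_lt_of_ciInf_lt (a := (⨅ η : ℝ, (η + c * ∫ ω, max (L y ω - η) 0 ∂μ)) + ε)
    (by linarith)
  have step1 : (⨅ η : ℝ, (η + c * ∫ ω, max (L z ω - η) 0 ∂μ)) ≤
      (a * η₁ + b * η₂) + c * ∫ ω, max (L z ω - (a * η₁ + b * η₂)) 0 ∂μ :=
    ciInf_le (hbdd z hz) _
  -- convexity of the integrand
  have hpt : ∀ᵐ ω ∂μ, max (L z ω - (a * η₁ + b * η₂)) 0 ≤
      a * max (L x ω - η₁) 0 + b * max (L y ω - η₂) 0 := by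
    filter_upwards [hconv] with ω hω
    have h1 : L z ω ≤ a * L x ω + b * L y ω := hω.2 hx hy ha hb hab
    have h2 : L z ω - (a * η₁ + b * η₂) ≤
        a * (L x ω - η₁) + b * (L y ω - η₂) := by nlinarith
    refine max_le (h2.trans (add_le_add ?_ ?_)) (by positivity)
    · exact mul_le_mul_of_nonneg_left (le_max_left _ _) ha
    · exact mul_le_mul_of_nonneg_left (le_max_left _ _) hb
  have hint2 : Integrable (fun ω => a * max (L x ω - η₁) 0 + b * max (L y ω - η₂) 0) μ :=
    ((hI x hx η₁).const_mul a).add ((hI y hy η₂).const_mul b)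
  have step2 : (∫ ω, max (L z ω - (a * η₁ + b * η₂)) 0 ∂μ) ≤
      a * (∫ ω, max (L x ω - η₁) 0 ∂μ) + b * ∫ ω, max (L y ω - η₂) 0 ∂μ := by
    have := integral_mono_ae (hI z hz _) hint2 hpt
    rwa [integral_add ((hI x hx η₁).const_mul a) ((hI y hy η₂).const_mul b),
      integral_const_mul, integral_const_mul] at this
  have step3 : (a * η₁ + b * η₂) + c * ∫ ω, max (L z ω - (a * η₁ + b * η₂)) 0 ∂μ ≤
      a * (η₁ + c * ∫ ω, max (L x ω - η₁) 0 ∂μ) +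
      b * (η₂ + c * ∫ ω, max (L y ω - η₂) 0 ∂μ) := by nlinarith
  have hfinal : a * (η₁ + c * ∫ ω, max (L x ω - η₁) 0 ∂μ) +
      b * (η₂ + c * ∫ ω, max (L y ω - η₂) 0 ∂μ) ≤
      a * ((⨅ η : ℝ, (η + c * ∫ ω, max (L x ω - η) 0 ∂μ)) + ε) +
      b * ((⨅ η : ℝ, (η + c * ∫ ω, max (L y ω - η) 0 ∂μ)) + ε) :=
    add_le_add (mul_le_mul_of_nonneg_left hη₁.le ha)
      (mul_le_mul_of_nonneg_left hη₂.le hb)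
  calc (⨅ η : ℝ, (η + c * ∫ ω, max (L z ω - η) 0 ∂μ)) ≤ _ := step1
    _ ≤ _ := step3
    _ ≤ _ := hfinal
    _ = a • (⨅ η : ℝ, (η + c * ∫ ω, max (L x ω - η) 0 ∂μ)) +
        b • (⨅ η : ℝ, (η + c * ∫ ω, max (L y ω - η) 0 ∂μ)) + ε := by
      simp only [smul_eq_mul]; nlinarith
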